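/- Let F = G·H⁻¹ ∈ ℂ[[x₁,x₂,x₃]] where G = x₃x₁(−3x₃ + 3x₃²x₁ + 3x₃²x₁x₂ − 2 + 2x₃x₁ + 2x₃x₁x₂ + x₁ + x₁x₂ − 2x₃² + 2x₃³x₁ + 2x₃³x₁x₂) and H = −x₃ + x₃²x₁ + x₃²x₁x₂ − 2 + 2x₃x₁ + 2x₃x₁x₂ + x₁ + x₁x₂ (note H(0,0,0) = −2 ≠ 0). Then for all (a,b) ∈ ℕ², the Maclaurin coefficient f_{(a,b)} of the algebraic function f(x₁,x₂) = x₁/√(1 − x₁ − x₂) equals F_{(a+b, b, a+b)}; here f_{(a,b)} = 0 if a = 0, and for a ≥ 1, f_{(a,b)} = binom(2(a+b−1), a+b−1)·binom(a+b−1, b)/4^{a+b−1}. -/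

import Mathlib

open MvPolynomial

noncomputable section SafonovAux

open MvPowerSeries

abbrev R3 := MvPowerSeries (Fin 3) ℂ

def ind (i j k : ℕ) : Fin 3 →₀ ℕ := Finsupp.equivFunOnFinite.symm ![i, j, k]

@[simp] lemma ind_apply_0 (i j k : ℕ) : ind i j k 0 = i := rfl
@[simp] lemma ind_apply_1 (i j k : ℕ) : ind i j k 1 = j := rfl
@[simp] lemma ind_apply_2 (i j k : ℕ) : ind i j k 2 = k := rfl

lemma eq_ind (σ : Fin 3 →₀ ℕ) : σ = ind (σ 0) (σ 1) (σ 2) := by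
  ext t; fin_cases t <;> rfl

lemma ind_le_iff {i j k i' j' k' : ℕ} :
    ind i j k ≤ ind i' j' k' ↔ i ≤ i' ∧ j ≤ j' ∧ k ≤ k' := by
  constructor
  · intro h
    exact ⟨h 0, h 1, h 2⟩
  · rintro ⟨h0, h1, h2⟩
    intro t; fin_cases t <;> assumption

lemma ind_sub (i j k i' j' k' : ℕ) :
    ind i j k - ind i' j' k' = ind (i - i') (j - j') (k - k') := by
  ext t; fin_cases t <;> simp [Finsupp.tsub_apply, ind]

lemma single_eq_ind_0 (e : ℕ) : Finsupp.single (0 : Fin 3) e = ind e 0 0 := by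
  ext t; fin_cases t <;> simp [Finsupp.single_apply, ind, Fin.ext_iff]

lemma single_eq_ind_1 (e : ℕ) : Finsupp.single (1 : Fin 3) e = ind 0 e 0 := by
  ext t; fin_cases t <;> simp [Finsupp.single_apply, ind, Fin.ext_iff]

lemma single_eq_ind_2 (e : ℕ) : Finsupp.single (2 : Fin 3) e = ind 0 0 e := by
  ext t; fin_cases t <;> simp [Finsupp.single_apply, ind, Fin.ext_iff]

lemma zero_eq_ind : (0 : Fin 3 →₀ ℕ) = ind 0 0 0 := by
  ext t; fin_cases t <;> rfl

/-- supported on the third axis -/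
def uOnly (Φ : R3) : Prop :=
  ∀ σ : Fin 3 →₀ ℕ, (σ 0 ≠ 0 ∨ σ 1 ≠ 0) → MvPowerSeries.coeff σ Φ = 0

lemma uOnly.add {Φ Ψ : R3} (hΦ : uOnly Φ) (hΨ : uOnly Ψ) : uOnly (Φ + Ψ) := by
  intro σ hσ; rw [map_add, hΦ σ hσ, hΨ σ hσ, add_zero]

lemma uOnly.mul {Φ Ψ : R3} (hΦ : uOnly Φ) (hΨ : uOnly Ψ) : uOnly (Φ * Ψ) := by
  intro σ hσ
  classical
  rw [MvPowerSeries.coeff_mul]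
  apply Finset.sum_eq_zero
  rintro ⟨p1, p2⟩ hp
  replace hp : p1 + p2 = σ := Finset.HasAntidiagonal.mem_antidiagonal.mp hp
  rcases hσ with h | h
  · have : p1 0 ≠ 0 ∨ p2 0 ≠ 0 := by
      by_contra hc
      push_neg at hc
      apply h
      rw [← hp, Finsupp.add_apply, hc.1, hc.2]
    rcases this with h1 | h1
    · rw [hΦ p1 (Or.inl h1), zero_mul]
    · rw [hΨ p2 (Or.inl h1), mul_zero]
  · have : p1 1 ≠ 0 ∨ p2 1 ≠ 0 := by
      by_contra hc
      push_neg at hc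
      apply h
      rw [← hp, Finsupp.add_apply, hc.1, hc.2]
    rcases this with h1 | h1
    · rw [hΦ p1 (Or.inr h1), zero_mul]
    · rw [hΨ p2 (Or.inr h1), mul_zero]

lemma uOnly.one : uOnly (1 : R3) := by
  intro σ hσ
  rw [MvPowerSeries.coeff_one]
  rw [if_neg]
  intro h
  rcases hσ with h1 | h1 <;> (apply h1; rw [h]; rfl)

lemma uOnly.X2 : uOnly (MvPowerSeries.X 2 : R3) := by
  intro σ hσ
  rw [MvPowerSeries.coeff_X]
  rw [if_neg]
  intro h
  rcases hσ with h1 | h1 <;>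
    (apply h1; rw [h]; simp [Finsupp.single_apply])

lemma uOnly.pow {Φ : R3} (hΦ : uOnly Φ) (n : ℕ) : uOnly (Φ ^ n) := by
  induction n with
  | zero => simpa using uOnly.one
  | succ n ih => rw [pow_succ]; exact ih.mul hΦ

lemma uOnly.zero : uOnly (0 : R3) := by
  intro σ _; rw [map_zero]

lemma uOnly.two : uOnly (2 : R3) := by
  have : (2 : R3) = 1 + 1 := by norm_num
  rw [this]; exact uOnly.one.add uOnly.one

lemma uOnly.three : uOnly (3 : R3) := by
  have : (3 : R3) = 1 + 1 + 1 := by norm_num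
  rw [this]; exact (uOnly.one.add uOnly.one).add uOnly.one

lemma uOnly.cC (a : ℂ) : uOnly ((MvPowerSeries.C (σ := Fin 3) (R := ℂ)) a) := by
  intro σ hσ
  rw [MvPowerSeries.coeff_C, if_neg]
  intro h
  rcases hσ with h1 | h1 <;> (apply h1; rw [h]; rfl)


/-- shift lemma for powers of X 2 -/
lemma coeff_X2_pow_mul (t : ℕ) (Z : R3) (i j k : ℕ) :
    MvPowerSeries.coeff (ind i j k) ((MvPowerSeries.X 2 : R3) ^ t * Z) =
      if t ≤ k then MvPowerSeries.coeff (ind i j (k - t)) Z else 0 := by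
  rw [MvPowerSeries.X_pow_eq, MvPowerSeries.coeff_monomial_mul, single_eq_ind_2]
  by_cases h : t ≤ k
  · rw [if_pos (by rw [ind_le_iff]; exact ⟨Nat.zero_le _, Nat.zero_le _, h⟩),
      if_pos h, ind_sub, one_mul]
    congr 2 <;> simp
  · rw [if_neg (by rw [ind_le_iff]; push_neg; intro _ _; omega), if_neg h]

lemma coeff_one_ind (i j k : ℕ) :
    MvPowerSeries.coeff (ind i j k) (1 : R3) =
      if i = 0 ∧ j = 0 ∧ k = 0 then 1 else 0 := by
  rw [MvPowerSeries.coeff_one]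
  have hiff : ind i j k = 0 ↔ i = 0 ∧ j = 0 ∧ k = 0 := by
    constructor
    · intro h
      refine ⟨?_, ?_, ?_⟩
      · simpa using DFunLike.congr_fun h 0
      · simpa using DFunLike.congr_fun h 1
      · simpa using DFunLike.congr_fun h 2
    · rintro ⟨h0, h1, h2⟩
      subst h0 h1 h2
      exact (zero_eq_ind).symm
  by_cases h : i = 0 ∧ j = 0 ∧ k = 0
  · rw [if_pos h, if_pos (hiff.mpr h)]
  · rw [if_neg h, if_neg (fun hc => h (hiff.mp hc))]

/-- coefficient of (1+u)^a on the u-axis -/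
lemma coeff_one_add_X2_pow (a k i j : ℕ) (hi : i = 0) (hj : j = 0) :
    MvPowerSeries.coeff (ind i j k) ((1 + MvPowerSeries.X 2 : R3) ^ a) =
      (Nat.choose a k : ℂ) := by
  subst hi hj
  induction a generalizing k with
  | zero =>
    rw [pow_zero, coeff_one_ind]
    rcases Nat.eq_zero_or_pos k with hk | hk
    · simp [hk]
    · rw [if_neg (by omega), Nat.choose_eq_zero_of_lt (by omega), Nat.cast_zero]
  | succ a ih =>
    rw [pow_succ', add_mul, one_mul, map_add, ih]
    rw [show (MvPowerSeries.X 2 : R3) * (1 + MvPowerSeries.X 2) ^ a =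
        (MvPowerSeries.X 2 : R3) ^ 1 * (1 + MvPowerSeries.X 2) ^ a by ring,
      coeff_X2_pow_mul]
    by_cases hk : 1 ≤ k
    · rw [if_pos hk, ih]
      have : k = (k - 1) + 1 := by omega
      rw [this, Nat.choose_succ_succ' a, Nat.cast_add]
      rw [show k - 1 + 1 - 1 = k - 1 by omega]
      ring
    · rw [if_neg hk]
      have : k = 0 := by omega
      simp [this]


-- Pexp : inverse of (1 + X 2)
def Pexp : R3 := fun σ => if σ 0 = 0 ∧ σ 1 = 0 then (-1 : ℂ) ^ (σ 2) else 0

def Qexp : R3 := fun σ => if σ 0 = 0 ∧ σ 1 = 0 then (-1 : ℂ) ^ (σ 2) / 2 ^ (σ 2 + 1) else 0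

lemma coeff_Pexp (i j k : ℕ) :
    MvPowerSeries.coeff (ind i j k) Pexp =
      if i = 0 ∧ j = 0 then (-1 : ℂ) ^ k else 0 := rfl

lemma coeff_Qexp (i j k : ℕ) :
    MvPowerSeries.coeff (ind i j k) Qexp =
      if i = 0 ∧ j = 0 then (-1 : ℂ) ^ k / 2 ^ (k + 1) else 0 := rfl

lemma uOnly_Pexp : uOnly Pexp := by
  intro σ hσ
  rw [eq_ind σ, coeff_Pexp, if_neg]
  intro hc
  rcases hσ with h | h
  exacts [h hc.1, h hc.2]

lemma uOnly_Qexp : uOnly Qexp := by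
  intro σ hσ
  rw [eq_ind σ, coeff_Qexp, if_neg]
  intro hc
  rcases hσ with h | h
  exacts [h hc.1, h hc.2]

lemma one_add_X2_mul_Pexp_aux (i j k : ℕ) :
    MvPowerSeries.coeff (ind i j k) ((1 + MvPowerSeries.X 2 : R3) * Pexp) =
      MvPowerSeries.coeff (ind i j k) (1 : R3) := by
  rw [add_mul, one_mul, map_add,
    show (MvPowerSeries.X 2 : R3) * Pexp = (MvPowerSeries.X 2 : R3) ^ 1 * Pexp by ring,
    coeff_X2_pow_mul, coeff_Pexp, coeff_one_ind]
  by_cases hij : i = 0 ∧ j = 0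
  · by_cases hk : 1 ≤ k
    · rw [if_pos hij, if_pos hk, coeff_Pexp, if_pos hij, if_neg (by omega)]
      have h1 : (-1 : ℂ) ^ k = -(-1 : ℂ) ^ (k - 1) := by
        rw [show k = (k - 1) + 1 by omega, pow_succ, Nat.add_sub_cancel]
        ring
      rw [h1]
      ring
    · have hk0 : k = 0 := by omega
      rw [if_pos hij, if_neg hk, if_pos ⟨hij.1, hij.2, hk0⟩, hk0]
      norm_num
  · rw [if_neg hij]
    by_cases hk : 1 ≤ k
    · rw [if_pos hk, coeff_Pexp, if_neg hij, if_neg (fun hc => hij ⟨hc.1, hc.2.1⟩)]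
      norm_num
    · rw [if_neg hk, if_neg (fun hc => hij ⟨hc.1, hc.2.1⟩)]
      norm_num

lemma one_add_X2_mul_Pexp : (1 + MvPowerSeries.X 2 : R3) * Pexp = 1 := by
  apply MvPowerSeries.ext
  intro σ
  rw [eq_ind σ, one_add_X2_mul_Pexp_aux]

lemma two_add_X2_mul_Qexp_aux (i j k : ℕ) :
    MvPowerSeries.coeff (ind i j k) ((2 + MvPowerSeries.X 2 : R3) * Qexp) =
      MvPowerSeries.coeff (ind i j k) (1 : R3) := by
  rw [add_mul, map_add,
    show (MvPowerSeries.X 2 : R3) * Qexp = (MvPowerSeries.X 2 : R3) ^ 1 * Qexp by ring,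
    coeff_X2_pow_mul,
    show (2 : R3) * Qexp = ((MvPowerSeries.C (σ := Fin 3) (R := ℂ))) 2 * Qexp by
      congr 1,
    MvPowerSeries.coeff_C_mul, coeff_Qexp, coeff_one_ind]
  by_cases hij : i = 0 ∧ j = 0
  · by_cases hk : 1 ≤ k
    · rw [if_pos hij, if_pos hk, coeff_Qexp, if_pos hij, if_neg (by omega)]
      have h1 : (-1 : ℂ) ^ k = -(-1 : ℂ) ^ (k - 1) := by
        rw [show k = (k - 1) + 1 by omega, pow_succ, Nat.add_sub_cancel]
        ring
      have h2 : (2 : ℂ) ^ (k + 1) = 2 ^ (k - 1 + 1) * 2 := by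
        rw [show k + 1 = (k - 1 + 1) + 1 by omega, pow_succ]
      rw [h1, h2]
      have h3 : (2 : ℂ) ^ (k - 1 + 1) ≠ 0 := pow_ne_zero _ two_ne_zero
      field_simp
      ring
    · have hk0 : k = 0 := by omega
      rw [if_pos hij, if_neg hk, if_pos ⟨hij.1, hij.2, hk0⟩, hk0]
      norm_num
  · rw [if_neg hij]
    by_cases hk : 1 ≤ k
    · rw [if_pos hk, coeff_Qexp, if_neg hij, if_neg (fun hc => hij ⟨hc.1, hc.2.1⟩)]
      norm_num
    · rw [if_neg hk, if_neg (fun hc => hij ⟨hc.1, hc.2.1⟩)]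
      norm_num

lemma two_add_X2_mul_Qexp : (2 + MvPowerSeries.X 2 : R3) * Qexp = 1 := by
  apply MvPowerSeries.ext
  intro σ
  rw [eq_ind σ, two_add_X2_mul_Qexp_aux]


lemma coeff_X0_pow_mul (t : ℕ) (Z : R3) (i j k : ℕ) :
    MvPowerSeries.coeff (ind i j k) ((MvPowerSeries.X 0 : R3) ^ t * Z) =
      if t ≤ i then MvPowerSeries.coeff (ind (i - t) j k) Z else 0 := by
  rw [MvPowerSeries.X_pow_eq, MvPowerSeries.coeff_monomial_mul, single_eq_ind_0]
  by_cases h : t ≤ i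
  · rw [if_pos (by rw [ind_le_iff]; exact ⟨h, Nat.zero_le _, Nat.zero_le _⟩),
      if_pos h, ind_sub, one_mul]
    congr 2 <;> simp
  · rw [if_neg (by rw [ind_le_iff]; push_neg; intro hc; omega), if_neg h]

lemma coeff_X1_pow_mul (t : ℕ) (Z : R3) (i j k : ℕ) :
    MvPowerSeries.coeff (ind i j k) ((MvPowerSeries.X 1 : R3) ^ t * Z) =
      if t ≤ j then MvPowerSeries.coeff (ind i (j - t) k) Z else 0 := by
  rw [MvPowerSeries.X_pow_eq, MvPowerSeries.coeff_monomial_mul, single_eq_ind_1]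
  by_cases h : t ≤ j
  · rw [if_pos (by rw [ind_le_iff]; exact ⟨Nat.zero_le _, h, Nat.zero_le _⟩),
      if_pos h, ind_sub, one_mul]
    congr 2 <;> simp
  · rw [if_neg (by rw [ind_le_iff]; push_neg; intro _ hc; omega), if_neg h]

/-- the master extraction lemma -/
lemma coeff_extract (e f : ℕ) (Ψ : R3) (hΨ : uOnly Ψ) (M b : ℕ) :
    MvPowerSeries.coeff (ind M b M)
        ((MvPowerSeries.X 0 : R3) ^ e * ((1 + MvPowerSeries.X 1) ^ f * Ψ)) =
      if e = M then (Nat.choose f b : ℂ) * MvPowerSeries.coeff (ind 0 0 M) Ψ else 0 := by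
  induction f generalizing b with
  | zero =>
    rw [pow_zero, one_mul, coeff_X0_pow_mul]
    by_cases he : e = M
    · rw [if_pos (le_of_eq he), if_pos he, show M - e = 0 by omega]
      rcases Nat.eq_zero_or_pos b with hb | hb
      · subst hb; norm_num
      · rw [hΨ (ind 0 b M) (Or.inr (by simp; omega)),
          Nat.choose_eq_zero_of_lt (by omega)]
        norm_num
    · rw [if_neg he]
      by_cases hle : e ≤ M
      · rw [if_pos hle]
        exact hΨ (ind (M - e) b M) (Or.inl (by simp; omega))
      · rw [if_neg hle]
  | succ f ih =>
    have hsplit : (MvPowerSeries.X 0 : R3) ^ e * ((1 + MvPowerSeries.X 1) ^ (f + 1) * Ψ) =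
        (MvPowerSeries.X 0 : R3) ^ e * ((1 + MvPowerSeries.X 1) ^ f * Ψ) +
          (MvPowerSeries.X 1 : R3) ^ 1 *
            ((MvPowerSeries.X 0 : R3) ^ e * ((1 + MvPowerSeries.X 1) ^ f * Ψ)) := by
      ring
    rw [hsplit, map_add, ih b, coeff_X1_pow_mul]
    by_cases hb : 1 ≤ b
    · rw [if_pos hb, ih (b - 1)]
      by_cases he : e = M
      · rw [if_pos he, if_pos he, if_pos he]
        have hp : (Nat.choose (f + 1) b : ℂ) =
            (Nat.choose f b : ℂ) + (Nat.choose f (b - 1) : ℂ) := by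
          rw [show b = (b - 1) + 1 by omega, Nat.choose_succ_succ, Nat.add_sub_cancel]
          push_cast
          ring
        rw [hp]
        ring
      · rw [if_neg he, if_neg he, if_neg he]
        norm_num
    · rw [if_neg hb]
      have hb0 : b = 0 := by omega
      subst hb0
      by_cases he : e = M
      · rw [if_pos he, if_pos he]
        norm_num
      · rw [if_neg he, if_neg he]
        norm_num


-- ring facts about Pexp powers
lemma pow_mul_Pexp (a t : ℕ) (h : t ≤ a) :
    (1 + MvPowerSeries.X 2 : R3) ^ a * Pexp ^ t = (1 + MvPowerSeries.X 2 : R3) ^ (a - t) := by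
  induction t with
  | zero => simp
  | succ t ih =>
    have h' : t ≤ a := by omega
    have ha : a - t = (a - (t+1)) + 1 := by omega
    calc (1 + MvPowerSeries.X 2 : R3) ^ a * Pexp ^ (t+1)
        = ((1 + MvPowerSeries.X 2 : R3) ^ a * Pexp ^ t) * Pexp := by ring
      _ = (1 + MvPowerSeries.X 2 : R3) ^ (a - t) * Pexp := by rw [ih h']
      _ = (1 + MvPowerSeries.X 2 : R3) ^ (a - (t+1)) *
            ((1 + MvPowerSeries.X 2 : R3) * Pexp) := by rw [ha]; ring
      _ = (1 + MvPowerSeries.X 2 : R3) ^ (a - (t+1)) := by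
          rw [one_add_X2_mul_Pexp, mul_one]

lemma Pexp_pow_mul (a : ℕ) :
    (1 + MvPowerSeries.X 2 : R3) ^ a * Pexp ^ (a + 1) = Pexp := by
  calc (1 + MvPowerSeries.X 2 : R3) ^ a * Pexp ^ (a + 1)
      = ((1 + MvPowerSeries.X 2 : R3) ^ a * Pexp ^ a) * Pexp := by ring
    _ = Pexp := by rw [pow_mul_Pexp a a le_rfl, Nat.sub_self, pow_zero, one_mul]

/-- truncation of the expansion of (1-z)^-(μ+1) -/
lemma trunc_div (μ : ℕ) : ∃ V : Polynomial ℂ,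
    (1 : Polynomial ℂ) - (1 - Polynomial.X) ^ (μ + 1) *
      (∑ t ∈ Finset.range μ, Polynomial.C ((Nat.choose (μ + t) t : ℂ)) * Polynomial.X ^ t) =
    Polynomial.X ^ μ * V := by
  set T : Polynomial ℂ :=
    ∑ t ∈ Finset.range μ, Polynomial.C ((Nat.choose (μ + t) t : ℂ)) * Polynomial.X ^ t with hT
  suffices h : Polynomial.X ^ μ ∣ (1 - (1 - Polynomial.X) ^ (μ + 1) * T) by
    obtain ⟨V, hV⟩ := h
    exact ⟨V, hV⟩
  rw [Polynomial.X_pow_dvd_iff]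
  intro d hd
  -- move to power series
  have hser : ((1 - (1 - Polynomial.X) ^ (μ + 1) * T : Polynomial ℂ) : PowerSeries ℂ) =
      (1 - PowerSeries.X) ^ (μ + 1) *
        ((PowerSeries.invOneSubPow ℂ (μ + 1)).val - (T : PowerSeries ℂ)) := by
    rw [mul_sub]
    have h1 : ((1 - PowerSeries.X : PowerSeries ℂ)) ^ (μ + 1) *
        (PowerSeries.invOneSubPow ℂ (μ + 1)).val = 1 := by
      have := (PowerSeries.invOneSubPow ℂ (μ + 1)).inv_val
      rwa [PowerSeries.invOneSubPow_inv_eq_one_sub_pow] at this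
    rw [h1]
    push_cast
    ring
  have hdvd2 : (PowerSeries.X : PowerSeries ℂ) ^ μ ∣
      ((PowerSeries.invOneSubPow ℂ (μ + 1)).val - (T : PowerSeries ℂ)) := by
    rw [PowerSeries.X_pow_dvd_iff]
    intro m hm
    rw [map_sub, PowerSeries.invOneSubPow_val_succ_eq_mk_add_choose,
      PowerSeries.coeff_mk, Polynomial.coeff_coe, hT, Polynomial.finset_sum_coeff]
    have hsum : ∀ t ∈ Finset.range μ, t ≠ m →
        (Polynomial.C ((Nat.choose (μ + t) t : ℂ)) * Polynomial.X ^ t).coeff m = 0 := by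
      intro t _ ht
      rw [Polynomial.coeff_C_mul, Polynomial.coeff_X_pow, if_neg (fun h => ht h.symm), mul_zero]
    rw [Finset.sum_eq_single m (fun t h1 h2 => hsum t h1 h2)
      (fun hc => absurd (Finset.mem_range.mpr hm) hc),
      Polynomial.coeff_C_mul, Polynomial.coeff_X_pow, if_pos rfl, mul_one]
    have hcs : (μ + m).choose μ = (μ + m).choose m := by
      rw [← Nat.choose_symm (by omega : μ ≤ μ + m), show μ + m - μ = m by omega]
    rw [hcs, sub_self]
  have hdvd : (PowerSeries.X : PowerSeries ℂ) ^ μ ∣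
      ((1 - (1 - Polynomial.X) ^ (μ + 1) * T : Polynomial ℂ) : PowerSeries ℂ) := by
    rw [hser]
    exact Dvd.dvd.mul_left hdvd2 _
  rw [PowerSeries.X_pow_dvd_iff] at hdvd
  have := hdvd d hd
  rwa [Polynomial.coeff_coe] at this


def chalf : R3 := (MvPowerSeries.C (σ := Fin 3) (R := ℂ)) 2⁻¹

lemma crux (μ : ℕ) (hμ : 2 ≤ μ) :
    MvPowerSeries.coeff (ind 0 0 (μ + 1))
      (2 * (MvPowerSeries.X 2 : R3) ^ 2 * (1 + MvPowerSeries.X 2) ^ (2 * μ - 1) *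
        Qexp ^ (μ + 1)) =
    (Nat.choose (2 * μ) μ : ℂ) / 4 ^ μ := by
  set uu : R3 := MvPowerSeries.X 2 with huu
  set w : R3 := chalf * (uu * Pexp) with hwdef
  have h2C : (2 : R3) = (MvPowerSeries.C (σ := Fin 3) (R := ℂ)) 2 :=
    (map_ofNat ((MvPowerSeries.C (σ := Fin 3) (R := ℂ))) 2).symm
  have hc2 : chalf * 2 = (1 : R3) := by
    rw [h2C, chalf, ← map_mul]
    norm_num
  have h1mw : (1 : R3) - w = chalf * ((2 + uu) * Pexp) := by
    have h := one_add_X2_mul_Pexp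
    rw [← huu] at h
    linear_combination (-1 : R3) * h + (-(Pexp * (1 + uu))) * hc2
  obtain ⟨V, hV⟩ := trunc_div μ
  set Vw : R3 := Polynomial.aeval w V with hVw
  set TW : R3 := ∑ t ∈ Finset.range μ,
      (MvPowerSeries.C (σ := Fin 3) (R := ℂ)) ((Nat.choose (μ + t) t : ℂ)) * w ^ t with hTW
  have EqA : (1 : R3) - (1 - w) ^ (μ + 1) * TW = w ^ μ * Vw := by
    have h := congrArg (Polynomial.aeval w) hV
    simpa [map_sub, map_one, map_mul, map_pow, map_sum, Polynomial.aeval_C,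
      Polynomial.aeval_X, MvPowerSeries.algebraMap_apply, Algebra.algebraMap_self,
      RingHom.id_apply, hTW, hVw] using h
  have hDQpow : ((2 + uu : R3)) ^ (μ + 1) * Qexp ^ (μ + 1) = 1 := by
    rw [← mul_pow]
    rw [show (2 + uu : R3) * Qexp = 1 from two_add_X2_mul_Qexp, one_pow]
  have hPP : (1 + uu : R3) ^ (2 * μ - 1) * Pexp ^ (μ + 1) = (1 + uu : R3) ^ (μ - 2) := by
    rw [pow_mul_Pexp _ _ (by omega), show 2 * μ - 1 - (μ + 1) = μ - 2 by omega]
  set W : R3 := 2 * (1 + uu) ^ (2 * μ - 1) * Qexp ^ (μ + 1) with hW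
  have e1 : W * (1 - w) ^ (μ + 1) =
      2 * chalf ^ (μ + 1) * (1 + uu) ^ (μ - 2) := by
    rw [h1mw, mul_pow, mul_pow]
    calc W * (chalf ^ (μ + 1) * ((2 + uu) ^ (μ + 1) * Pexp ^ (μ + 1)))
        = (2 * chalf ^ (μ + 1)) * ((1 + uu) ^ (2 * μ - 1) * Pexp ^ (μ + 1)) *
            ((2 + uu) ^ (μ + 1) * Qexp ^ (μ + 1)) := by
          rw [hW]; ring
      _ = 2 * chalf ^ (μ + 1) * (1 + uu) ^ (μ - 2) := by
          rw [hPP, hDQpow]; ring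
  have EqA' : (1 : R3) = (1 - w) ^ (μ + 1) * TW + w ^ μ * Vw := by
    linear_combination EqA
  have key : W = (2 * chalf ^ (μ + 1) * (1 + uu) ^ (μ - 2)) * TW +
      uu ^ μ * (chalf ^ μ * Pexp ^ μ * Vw * W) := by
    have k2 : W * (w ^ μ * Vw) = uu ^ μ * (chalf ^ μ * Pexp ^ μ * Vw * W) := by
      rw [hwdef, mul_pow, mul_pow]
      ring
    calc W = (W * (1 - w) ^ (μ + 1)) * TW + W * (w ^ μ * Vw) := by
          linear_combination W * EqA'
      _ = _ := by rw [e1, k2]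
  have hstep : 2 * uu ^ 2 * (1 + uu) ^ (2 * μ - 1) * Qexp ^ (μ + 1) = uu ^ 2 * W := by
    rw [hW]; ring
  rw [hstep, coeff_X2_pow_mul, if_pos (by omega : 2 ≤ μ + 1),
    show μ + 1 - 2 = μ - 1 by omega, key, map_add,
    coeff_X2_pow_mul, if_neg (by omega : ¬ μ ≤ μ - 1), add_zero,
    Finset.mul_sum, map_sum]
  have hterm : ∀ t : ℕ, (2 * chalf ^ (μ + 1) * (1 + uu) ^ (μ - 2)) *
      ((MvPowerSeries.C (σ := Fin 3) (R := ℂ)) ((Nat.choose (μ + t) t : ℂ)) * w ^ t) =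
      (MvPowerSeries.C (σ := Fin 3) (R := ℂ))
          (2 * 2⁻¹ ^ (μ + 1) * (Nat.choose (μ + t) t : ℂ) * 2⁻¹ ^ t) *
        (uu ^ t * ((1 + uu) ^ (μ - 2) * Pexp ^ t)) := by
    intro t
    rw [map_mul, map_mul, map_mul, map_pow, map_pow, ← h2C, hwdef, chalf]
    ring
  rw [Finset.sum_eq_single (μ - 1)]
  · rw [hterm, MvPowerSeries.coeff_C_mul,
      show (1 + uu : R3) ^ (μ - 2) * Pexp ^ (μ - 1) = Pexp by
        rw [show μ - 1 = (μ - 2) + 1 by omega]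
        exact Pexp_pow_mul (μ - 2),
      coeff_X2_pow_mul, if_pos (le_refl (μ - 1)), Nat.sub_self,
      coeff_Pexp, if_pos ⟨rfl, rfl⟩, pow_zero, mul_one]
    have hnat : Nat.choose (2 * μ) μ = 2 * Nat.choose (μ + (μ - 1)) (μ - 1) := by
      have hsymm : (2 * μ - 1).choose (μ - 1) = (2 * μ - 1).choose μ := by
        rw [← Nat.choose_symm (by omega : μ ≤ 2 * μ - 1),
          show 2 * μ - 1 - μ = μ - 1 by omega]
      calc (2 * μ).choose μ = ((2 * μ - 1) + 1).choose ((μ - 1) + 1) := by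
            rw [show (2 * μ - 1) + 1 = 2 * μ by omega, show (μ - 1) + 1 = μ by omega]
        _ = (2 * μ - 1).choose (μ - 1) + (2 * μ - 1).choose ((μ - 1) + 1) :=
            Nat.choose_succ_succ _ _
        _ = 2 * Nat.choose (μ + (μ - 1)) (μ - 1) := by
            rw [show (μ - 1) + 1 = μ by omega, ← hsymm,
              show μ + (μ - 1) = 2 * μ - 1 by omega]
            ring
    rw [hnat]
    have hpow : (2 : ℂ)⁻¹ ^ (μ + 1) * 2⁻¹ ^ (μ - 1) = ((4 : ℂ) ^ μ)⁻¹ := by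
      rw [← pow_add, show (μ + 1) + (μ - 1) = 2 * μ by omega,
        show (4 : ℂ) = 2 ^ 2 by norm_num, ← pow_mul, inv_pow]
    push_cast
    rw [div_eq_mul_inv, ← hpow]
    ring
  · intro t ht hne
    rw [Finset.mem_range] at ht
    rw [hterm, MvPowerSeries.coeff_C_mul,
      show (1 + uu : R3) ^ (μ - 2) * Pexp ^ t = (1 + uu : R3) ^ (μ - 2 - t) from
        pow_mul_Pexp (μ - 2) t (by omega),
      coeff_X2_pow_mul, if_pos (by omega : t ≤ μ - 1),
      coeff_one_add_X2_pow _ _ _ _ rfl rfl,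
      Nat.choose_eq_zero_of_lt (show μ - 2 - t < μ - 1 - t by omega),
      Nat.cast_zero, mul_zero]
  · intro hc
    exact absurd (Finset.mem_range.mpr (by omega : μ - 1 < μ)) hc



lemma constantCoeff_Qexp : (MvPowerSeries.constantCoeff (σ := Fin 3) (R := ℂ)) Qexp = 2⁻¹ := by
  have h := coeff_Qexp 0 0 0
  rw [← zero_eq_ind] at h
  rw [← MvPowerSeries.coeff_zero_eq_constantCoeff_apply, h]
  norm_num

lemma crux' (μ : ℕ) (hμ : 1 ≤ μ) :
    MvPowerSeries.coeff (ind 0 0 (μ + 1))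
      (2 * (MvPowerSeries.X 2 : R3) ^ 2 * (1 + MvPowerSeries.X 2) ^ (2 * μ - 1) *
        Qexp ^ (μ + 1)) =
    (Nat.choose (2 * μ) μ : ℂ) / 4 ^ μ := by
  rcases Nat.lt_or_ge μ 2 with h2 | h2
  · have hμ1 : μ = 1 := by omega
    subst hμ1
    rw [show (2 : R3) * (MvPowerSeries.X 2) ^ 2 * (1 + MvPowerSeries.X 2) ^ (2 * 1 - 1) *
        Qexp ^ (1 + 1) =
        (MvPowerSeries.X 2 : R3) ^ 2 * (2 * (1 + MvPowerSeries.X 2) * Qexp ^ 2) by ring,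
      coeff_X2_pow_mul, if_pos (by omega : 2 ≤ 1 + 1), show 1 + 1 - 2 = 0 by omega,
      ← zero_eq_ind, MvPowerSeries.coeff_zero_eq_constantCoeff_apply]
    rw [map_mul, map_mul, map_pow, map_add, map_one, constantCoeff_Qexp,
      MvPowerSeries.constantCoeff_X, map_ofNat]
    norm_num
  · exact crux μ h2

lemma sum_ite_shift (M s : ℕ) (f : ℕ → ℂ) :
    (∑ m ∈ Finset.range M, if m + s = M then f m else 0) =
      if s ≤ M ∧ 1 ≤ s then f (M - s) else 0 := by
  by_cases h : s ≤ M ∧ 1 ≤ s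
  · rw [if_pos h, Finset.sum_eq_single (M - s)]
    · rw [if_pos (by omega)]
    · intro m hm hne
      rw [Finset.mem_range] at hm
      rw [if_neg (by omega)]
    · intro hc
      exact absurd (Finset.mem_range.mpr (by omega)) hc
  · rw [if_neg h]
    apply Finset.sum_eq_zero
    intro m hm
    rw [Finset.mem_range] at hm
    rw [if_neg (by omega)]

end SafonovAux

/-- The Maclaurin coefficients of `f(x₁,x₂) = x₁/√(1-x₁-x₂)` equal the coefficients
`F_{(a+b, b, a+b)}` of the trivariate rational function `F = G/H` produced by Safonov's
procedure.  Explicitly, `f_{(0,b)} = 0` and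
`f_{(a,b)} = binom(2(a+b-1), a+b-1)·binom(a+b-1, b)/4^{a+b-1}` for `a ≥ 1`. -/
theorem another_basic_bivariate_diagonal
    (G H : MvPolynomial (Fin 3) ℂ)
    (hG : G = X 2 * X 0 * (-3 * X 2 + 3 * (X 2) ^ 2 * X 0 + 3 * (X 2) ^ 2 * X 0 * X 1
      - 2 + 2 * X 2 * X 0 + 2 * X 2 * X 0 * X 1 + X 0 + X 0 * X 1
      - 2 * (X 2) ^ 2 + 2 * (X 2) ^ 3 * X 0 + 2 * (X 2) ^ 3 * X 0 * X 1))
    (hH : H = -X 2 + (X 2) ^ 2 * X 0 + (X 2) ^ 2 * X 0 * X 1 - 2 + 2 * X 2 * X 0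
      + 2 * X 2 * X 0 * X 1 + X 0 + X 0 * X 1)
    (F : MvPowerSeries (Fin 3) ℂ)
    (hF : F = (G : MvPowerSeries (Fin 3) ℂ) * (H : MvPowerSeries (Fin 3) ℂ)⁻¹) :
    ∀ a b : ℕ,
      MvPowerSeries.coeff (Finsupp.equivFunOnFinite.symm ![a + b, b, a + b]) F =
        if a = 0 then 0
        else (Nat.choose (2 * (a + b - 1)) (a + b - 1) : ℂ) *
          (Nat.choose (a + b - 1) b : ℂ) / 4 ^ (a + b - 1) := by
  intro a b
  have hq := two_add_X2_mul_Qexp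
  have hHs : (H : MvPowerSeries (Fin 3) ℂ) =
      (MvPowerSeries.X 0 * (1 + MvPowerSeries.X 1)) * (1 + MvPowerSeries.X 2) ^ 2 -
        (2 + MvPowerSeries.X 2) := by
    rw [hH, show ∀ P : MvPolynomial (Fin 3) ℂ, ((P : MvPolynomial (Fin 3) ℂ) :
      MvPowerSeries (Fin 3) ℂ) = MvPolynomial.coeToMvPowerSeries.ringHom P from fun _ => rfl]
    simp only [map_add, map_sub, map_neg, map_mul, map_pow, map_ofNat,
      MvPolynomial.coeToMvPowerSeries.ringHom_apply, MvPolynomial.coe_X]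
    ring
  have hGs : (G : MvPowerSeries (Fin 3) ℂ) = MvPowerSeries.X 0 * (MvPowerSeries.X 2 *
      ((MvPowerSeries.X 0 * (1 + MvPowerSeries.X 1)) *
        ((1 + MvPowerSeries.X 2) * (2 * MvPowerSeries.X 2 ^ 2 + MvPowerSeries.X 2 + 1)) -
        (2 * MvPowerSeries.X 2 ^ 2 + 3 * MvPowerSeries.X 2 + 2))) := by
    rw [hG, show ∀ P : MvPolynomial (Fin 3) ℂ, ((P : MvPolynomial (Fin 3) ℂ) :
      MvPowerSeries (Fin 3) ℂ) = MvPolynomial.coeToMvPowerSeries.ringHom P from fun _ => rfl]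
    simp only [map_add, map_sub, map_neg, map_mul, map_pow, map_ofNat,
      MvPolynomial.coeToMvPowerSeries.ringHom_apply, MvPolynomial.coe_X]
    ring
  have hconst : (MvPowerSeries.constantCoeff (σ := Fin 3) (R := ℂ)) (H : MvPowerSeries (Fin 3) ℂ) = -2 := by
    rw [hHs]
    simp [map_ofNat]
  have hFH : F * (H : MvPowerSeries (Fin 3) ℂ) = (G : MvPowerSeries (Fin 3) ℂ) := by
    rw [hF, mul_assoc,
      MvPowerSeries.inv_mul_cancel (H : MvPowerSeries (Fin 3) ℂ) (by rw [hconst]; norm_num),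
      mul_one]
  have hFHs : F * ((MvPowerSeries.X 0 * (1 + MvPowerSeries.X 1)) *
      (1 + MvPowerSeries.X 2) ^ 2 - (2 + MvPowerSeries.X 2)) =
      (G : MvPowerSeries (Fin 3) ℂ) := by
    rw [← hHs]; exact hFH
  -- the telescoping identity
  have tel : ∀ N : ℕ, F =
      -(∑ m ∈ Finset.range N, (G : MvPowerSeries (Fin 3) ℂ) *
          (MvPowerSeries.X 0 ^ m * (1 + MvPowerSeries.X 1) ^ m *
            (1 + MvPowerSeries.X 2) ^ (2 * m) * Qexp ^ (m + 1))) +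
        MvPowerSeries.X 0 ^ N * ((1 + MvPowerSeries.X 1) ^ N *
          (1 + MvPowerSeries.X 2) ^ (2 * N) * Qexp ^ N * F) := by
    intro N
    induction N with
    | zero => simp
    | succ N ih =>
      have hstep : MvPowerSeries.X 0 ^ N * ((1 + MvPowerSeries.X 1) ^ N *
          (1 + MvPowerSeries.X 2) ^ (2 * N) * Qexp ^ N * F) =
          -((G : MvPowerSeries (Fin 3) ℂ) * (MvPowerSeries.X 0 ^ N *
              (1 + MvPowerSeries.X 1) ^ N *
              (1 + MvPowerSeries.X 2) ^ (2 * N) * Qexp ^ (N + 1))) +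
          MvPowerSeries.X 0 ^ (N + 1) * ((1 + MvPowerSeries.X 1) ^ (N + 1) *
            (1 + MvPowerSeries.X 2) ^ (2 * (N + 1)) * Qexp ^ (N + 1) * F) := by
        linear_combination (-(MvPowerSeries.X 0 ^ N * (1 + MvPowerSeries.X 1) ^ N *
            (1 + MvPowerSeries.X 2) ^ (2 * N) * Qexp ^ (N + 1))) * hFHs +
          (-(MvPowerSeries.X 0 ^ N * (1 + MvPowerSeries.X 1) ^ N *
            (1 + MvPowerSeries.X 2) ^ (2 * N) * Qexp ^ N * F)) * hq
      rw [hstep] at ih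
      rw [Finset.sum_range_succ]
      linear_combination ih
  -- uOnly facts
  have honeX2 : uOnly ((1 : R3) + MvPowerSeries.X 2) := uOnly.one.add uOnly.X2
  have hP1u : uOnly ((1 + MvPowerSeries.X 2 : R3) *
      (2 * MvPowerSeries.X 2 ^ 2 + MvPowerSeries.X 2 + 1)) :=
    honeX2.mul (((uOnly.two.mul (uOnly.X2.pow 2)).add uOnly.X2).add uOnly.one)
  have hP2u : uOnly ((2 * MvPowerSeries.X 2 ^ 2 + 3 * MvPowerSeries.X 2 + 2 : R3)) :=
    ((uOnly.two.mul (uOnly.X2.pow 2)).add (uOnly.three.mul uOnly.X2)).add uOnly.two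
  have hΨ1 : ∀ m : ℕ, uOnly (MvPowerSeries.X 2 *
      ((1 + MvPowerSeries.X 2 : R3) * (2 * MvPowerSeries.X 2 ^ 2 + MvPowerSeries.X 2 + 1)) *
      (1 + MvPowerSeries.X 2) ^ (2 * m) * Qexp ^ (m + 1)) :=
    fun m => ((uOnly.X2.mul hP1u).mul (honeX2.pow _)).mul (uOnly_Qexp.pow _)
  have hΨ2 : ∀ m : ℕ, uOnly (MvPowerSeries.X 2 *
      (2 * MvPowerSeries.X 2 ^ 2 + 3 * MvPowerSeries.X 2 + 2 : R3) *
      (1 + MvPowerSeries.X 2) ^ (2 * m) * Qexp ^ (m + 1)) :=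
    fun m => ((uOnly.X2.mul hP2u).mul (honeX2.pow _)).mul (uOnly_Qexp.pow _)
  -- index
  have hind : Finsupp.equivFunOnFinite.symm ![a + b, b, a + b] = ind (a + b) b (a + b) := rfl
  rw [hind, tel (a + b), map_add, map_neg, map_sum]
  -- the tail has zero coefficient
  have htail : MvPowerSeries.coeff (ind (a + b) b (a + b))
      (MvPowerSeries.X 0 ^ (a + b) * ((1 + MvPowerSeries.X 1) ^ (a + b) *
        (1 + MvPowerSeries.X 2) ^ (2 * (a + b)) * Qexp ^ (a + b) * F)) = 0 := by
    rw [coeff_X0_pow_mul, if_pos le_rfl, Nat.sub_self]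
    have hFfac : (1 + MvPowerSeries.X 1) ^ (a + b) *
        (1 + MvPowerSeries.X 2) ^ (2 * (a + b)) * Qexp ^ (a + b) * F =
        MvPowerSeries.X 0 ^ 1 * ((1 + MvPowerSeries.X 1) ^ (a + b) *
          (1 + MvPowerSeries.X 2) ^ (2 * (a + b)) * Qexp ^ (a + b) *
          (MvPowerSeries.X 2 * ((MvPowerSeries.X 0 * (1 + MvPowerSeries.X 1)) *
            ((1 + MvPowerSeries.X 2) * (2 * MvPowerSeries.X 2 ^ 2 + MvPowerSeries.X 2 + 1)) -
            (2 * MvPowerSeries.X 2 ^ 2 + 3 * MvPowerSeries.X 2 + 2)) *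
            (H : MvPowerSeries (Fin 3) ℂ)⁻¹)) := by
      rw [hF, hGs]; ring
    rw [hFfac, coeff_X0_pow_mul, if_neg (by omega)]
  rw [htail, add_zero]
  -- evaluate each summand
  have hsummand : ∀ m ∈ Finset.range (a + b),
      MvPowerSeries.coeff (ind (a + b) b (a + b)) ((G : MvPowerSeries (Fin 3) ℂ) *
        (MvPowerSeries.X 0 ^ m * (1 + MvPowerSeries.X 1) ^ m *
          (1 + MvPowerSeries.X 2) ^ (2 * m) * Qexp ^ (m + 1))) =
      (if m + 2 = a + b then (Nat.choose (m + 1) b : ℂ) *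
          MvPowerSeries.coeff (ind 0 0 (a + b)) (MvPowerSeries.X 2 *
            ((1 + MvPowerSeries.X 2 : R3) *
              (2 * MvPowerSeries.X 2 ^ 2 + MvPowerSeries.X 2 + 1)) *
            (1 + MvPowerSeries.X 2) ^ (2 * m) * Qexp ^ (m + 1)) else 0) -
      (if m + 1 = a + b then (Nat.choose m b : ℂ) *
          MvPowerSeries.coeff (ind 0 0 (a + b)) (MvPowerSeries.X 2 *
            (2 * MvPowerSeries.X 2 ^ 2 + 3 * MvPowerSeries.X 2 + 2 : R3) *
            (1 + MvPowerSeries.X 2) ^ (2 * m) * Qexp ^ (m + 1)) else 0) := by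
    intro m _
    have hsplit : (G : MvPowerSeries (Fin 3) ℂ) *
        (MvPowerSeries.X 0 ^ m * (1 + MvPowerSeries.X 1) ^ m *
          (1 + MvPowerSeries.X 2) ^ (2 * m) * Qexp ^ (m + 1)) =
        MvPowerSeries.X 0 ^ (m + 2) * ((1 + MvPowerSeries.X 1) ^ (m + 1) *
          (MvPowerSeries.X 2 *
            ((1 + MvPowerSeries.X 2 : R3) *
              (2 * MvPowerSeries.X 2 ^ 2 + MvPowerSeries.X 2 + 1)) *
            (1 + MvPowerSeries.X 2) ^ (2 * m) * Qexp ^ (m + 1))) -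
        MvPowerSeries.X 0 ^ (m + 1) * ((1 + MvPowerSeries.X 1) ^ m *
          (MvPowerSeries.X 2 *
            (2 * MvPowerSeries.X 2 ^ 2 + 3 * MvPowerSeries.X 2 + 2 : R3) *
            (1 + MvPowerSeries.X 2) ^ (2 * m) * Qexp ^ (m + 1))) := by
      rw [hGs]; ring
    rw [hsplit, map_sub, coeff_extract _ _ _ (hΨ1 m), coeff_extract _ _ _ (hΨ2 m)]
  rw [Finset.sum_congr rfl hsummand, Finset.sum_sub_distrib,
    sum_ite_shift (a + b) 2, sum_ite_shift (a + b) 1]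
  -- now case on M = a + b
  rcases Nat.lt_or_ge (a + b) 1 with hM0 | hM1
  · -- M = 0
    have ha : a = 0 := by omega
    rw [if_neg (by omega), if_neg (by omega), if_pos ha]
    norm_num
  rcases Nat.lt_or_ge (a + b) 2 with hM1' | hM2
  · -- M = 1
    have hM : a + b = 1 := by omega
    rw [if_neg (by omega), if_pos (by omega)]
    -- compute the coefficient c2 0
    have hc20 : MvPowerSeries.coeff (ind 0 0 (a + b)) (MvPowerSeries.X 2 *
        (2 * MvPowerSeries.X 2 ^ 2 + 3 * MvPowerSeries.X 2 + 2 : R3) *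
        (1 + MvPowerSeries.X 2) ^ (2 * (a + b - 1)) * Qexp ^ ((a + b - 1) + 1)) = 1 := by
      rw [hM]
      rw [show (MvPowerSeries.X 2 : R3) *
          (2 * MvPowerSeries.X 2 ^ 2 + 3 * MvPowerSeries.X 2 + 2) *
          (1 + MvPowerSeries.X 2) ^ (2 * (1 - 1)) * Qexp ^ ((1 - 1) + 1) =
          MvPowerSeries.X 2 ^ 1 *
          ((2 * MvPowerSeries.X 2 ^ 2 + 3 * MvPowerSeries.X 2 + 2) * Qexp) by ring,
        coeff_X2_pow_mul, if_pos le_rfl, Nat.sub_self, ← zero_eq_ind,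
        MvPowerSeries.coeff_zero_eq_constantCoeff_apply]
      rw [map_mul, map_add, map_add, map_mul, map_mul, map_pow,
        MvPowerSeries.constantCoeff_X, constantCoeff_Qexp, map_ofNat, map_ofNat]
      norm_num
    rw [hc20]
    rcases Nat.eq_zero_or_pos a with ha | ha
    · have hb : b = 1 := by omega
      subst ha; subst hb
      norm_num
    · have ha1 : a = 1 := by omega
      have hb : b = 0 := by omega
      subst ha1; subst hb
      norm_num
  · -- M ≥ 2
    rw [if_pos (by omega : 2 ≤ a + b ∧ 1 ≤ 2), if_pos (by omega : 1 ≤ a + b ∧ 1 ≤ 1),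
      show (a + b - 2) + 1 = a + b - 1 by omega]
    have hcombm : ∀ m : ℕ,
        MvPowerSeries.X 2 *
          (2 * MvPowerSeries.X 2 ^ 2 + 3 * MvPowerSeries.X 2 + 2 : R3) *
          (1 + MvPowerSeries.X 2) ^ (2 * (m + 1)) * Qexp ^ ((m + 1) + 1) -
        MvPowerSeries.X 2 *
          ((1 + MvPowerSeries.X 2 : R3) *
            (2 * MvPowerSeries.X 2 ^ 2 + MvPowerSeries.X 2 + 1)) *
          (1 + MvPowerSeries.X 2) ^ (2 * m) * Qexp ^ (m + 1) =
        2 * MvPowerSeries.X 2 ^ 2 * (1 + MvPowerSeries.X 2) ^ (2 * (m + 1) - 1) *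
          Qexp ^ ((m + 1) + 1) := by
      intro m
      have hexp : 2 * (m + 1) - 1 = 2 * m + 1 := by omega
      rw [hexp]
      linear_combination (MvPowerSeries.X 2 *
        ((1 + MvPowerSeries.X 2 : R3) *
          (2 * MvPowerSeries.X 2 ^ 2 + MvPowerSeries.X 2 + 1)) *
        (1 + MvPowerSeries.X 2) ^ (2 * m) * Qexp ^ (m + 1)) * hq
    have hcomb := hcombm (a + b - 2)
    rw [show (a + b - 2) + 1 = a + b - 1 by omega] at hcomb
    have hdiff : MvPowerSeries.coeff (ind 0 0 (a + b)) (MvPowerSeries.X 2 *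
          (2 * MvPowerSeries.X 2 ^ 2 + 3 * MvPowerSeries.X 2 + 2 : R3) *
          (1 + MvPowerSeries.X 2) ^ (2 * (a + b - 1)) * Qexp ^ ((a + b - 1) + 1)) -
        MvPowerSeries.coeff (ind 0 0 (a + b)) (MvPowerSeries.X 2 *
          ((1 + MvPowerSeries.X 2 : R3) *
            (2 * MvPowerSeries.X 2 ^ 2 + MvPowerSeries.X 2 + 1)) *
          (1 + MvPowerSeries.X 2) ^ (2 * (a + b - 2)) * Qexp ^ (a + b - 1)) =
        (Nat.choose (2 * (a + b - 1)) (a + b - 1) : ℂ) / 4 ^ (a + b - 1) := by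
      rw [← map_sub, hcomb,
        show ind 0 0 (a + b) = ind 0 0 ((a + b - 1) + 1) from by
          rw [show (a + b - 1) + 1 = a + b by omega]]
      exact crux' (a + b - 1) (by omega)
    rcases Nat.eq_zero_or_pos a with ha | ha
    · rw [if_pos ha]
      have hb : (Nat.choose (a + b - 1) b : ℂ) = 0 := by
        rw [Nat.choose_eq_zero_of_lt (by omega), Nat.cast_zero]
      rw [hb]
      ring
    · rw [if_neg (by omega)]
      linear_combination ((Nat.choose (a + b - 1) b : ℂ)) * hdiff
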